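/- Let E be a real Hilbert space and f : E → ℝ a differentiable function whose gradient ∇f : E → E is γ-Lipschitz for some γ > 0. Then for every θ, v ∈ E and every step size μ with 0 < μ ≤ 1/γ, one has f(θ − μ·v) − f(θ) ≤ −(μ/2)·(‖∇f(θ)‖² − ‖v − ∇f(θ)‖²). (Pointwise core of Theorem A.2, 'error of one gradient step'.) -/

import Mathlib

open InnerProductSpace

lemma inner_gradient_eq_fderiv
    {E : Type*} [NormedAddCommGroup E] [InnerProductSpace ℝ E] [CompleteSpace E]
    (f : E → ℝ) (y d : E) :
    ⟪gradient f y, d⟫_ℝ = fderiv ℝ f y d := by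
  rw [← InnerProductSpace.toDual_apply_apply, gradient, LinearIsometryEquiv.apply_symm_apply]

/-- Descent lemma: for a differentiable `f` with `γ`-Lipschitz gradient,
`f (x + d) - f x ≤ ⟪∇f x, d⟫ + γ/2 ‖d‖²`. -/
lemma descent_lemma
    {E : Type*} [NormedAddCommGroup E] [InnerProductSpace ℝ E] [CompleteSpace E]
    (f : E → ℝ) (hf : Differentiable ℝ f)
    (γ : ℝ) (hγ : 0 ≤ γ)
    (hlip : ∀ x y : E, ‖gradient f x - gradient f y‖ ≤ γ * ‖x - y‖)
    (x d : E) :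
    f (x + d) - f x ≤ ⟪gradient f x, d⟫_ℝ + γ / 2 * ‖d‖ ^ 2 := by
  set c : ℝ := ⟪gradient f x, d⟫_ℝ with hc
  set g : ℝ → ℝ := fun t => f (x + t • d) - t * c - γ / 2 * ‖d‖ ^ 2 * t ^ 2 with hg
  have hline : ∀ t : ℝ, HasDerivAt (fun t : ℝ => x + t • d) d t := by
    intro t
    simpa using ((hasDerivAt_id t).smul_const d).const_add x
  have hcomp : ∀ t : ℝ, HasDerivAt (fun t : ℝ => f (x + t • d))
      (⟪gradient f (x + t • d), d⟫_ℝ) t := by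
    intro t
    rw [inner_gradient_eq_fderiv]
    exact (hf (x + t • d)).hasFDerivAt.comp_hasDerivAt t (hline t)
  have hgderiv : ∀ t : ℝ, HasDerivAt g
      (⟪gradient f (x + t • d), d⟫_ℝ - c - γ / 2 * ‖d‖ ^ 2 * (2 * t)) t := by
    intro t
    have h1 : HasDerivAt (fun t : ℝ => t * c) c t := by
      simpa using (hasDerivAt_id t).mul_const c
    have h2 : HasDerivAt (fun t : ℝ => γ / 2 * ‖d‖ ^ 2 * t ^ 2)
        (γ / 2 * ‖d‖ ^ 2 * (2 * t)) t := by
      convert (hasDerivAt_pow 2 t).const_mul (γ / 2 * ‖d‖ ^ 2) using 1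
      · rfl
      · rfl
      push_cast
      ring
    exact ((hcomp t).sub h1).sub h2
  have hdiff : Differentiable ℝ g := fun t => (hgderiv t).differentiableAt
  have hanti : AntitoneOn g (Set.Icc (0:ℝ) 1) := by
    apply antitoneOn_of_deriv_nonpos (convex_Icc 0 1) hdiff.continuous.continuousOn
      hdiff.differentiableOn
    intro t ht
    rw [interior_Icc] at ht
    rw [(hgderiv t).deriv]
    have hbound : ⟪gradient f (x + t • d) - gradient f x, d⟫_ℝ ≤ γ * t * ‖d‖ ^ 2 := by
      calc ⟪gradient f (x + t • d) - gradient f x, d⟫_ℝ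
          ≤ ‖gradient f (x + t • d) - gradient f x‖ * ‖d‖ := real_inner_le_norm _ _
        _ ≤ γ * ‖(x + t • d) - x‖ * ‖d‖ := by gcongr; exact hlip _ _
        _ = γ * t * ‖d‖ ^ 2 := by
            rw [add_sub_cancel_left, norm_smul, Real.norm_eq_abs,
              abs_of_pos ht.1]
            ring
    rw [inner_sub_left] at hbound
    nlinarith
  have h01 := hanti (Set.mem_Icc.mpr ⟨le_refl 0, zero_le_one⟩)
    (Set.mem_Icc.mpr ⟨zero_le_one, le_refl 1⟩) zero_le_one
  simp only [hg, zero_smul, add_zero, zero_mul, one_smul, one_mul, one_pow, mul_one,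
    sub_zero] at h01
  linarith

/-- Pointwise core of Theorem A.2 ('error of one gradient step'):
for a differentiable `f : E → ℝ` on a real Hilbert space with `γ`-Lipschitz gradient,
any step `θ ↦ θ - μ • v` with `0 < μ ≤ 1/γ` satisfies the descent-type inequality. -/
theorem one_gradient_step_error
    {E : Type*} [NormedAddCommGroup E] [InnerProductSpace ℝ E] [CompleteSpace E]
    (f : E → ℝ) (hf : Differentiable ℝ f)
    (γ : ℝ) (hγ : 0 < γ)
    (hlip : ∀ x y : E, ‖gradient f x - gradient f y‖ ≤ γ * ‖x - y‖)
    (θ v : E) (μ : ℝ) (hμ : 0 < μ) (hμγ : μ ≤ 1 / γ) :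
    f (θ - μ • v) - f θ ≤
      -(μ / 2) * (‖gradient f θ‖ ^ 2 - ‖v - gradient f θ‖ ^ 2) := by
  have key := descent_lemma f hf γ hγ.le hlip θ (-(μ • v))
  rw [← sub_eq_add_neg] at key
  have h1 : ⟪gradient f θ, -(μ • v)⟫_ℝ = -(μ * ⟪gradient f θ, v⟫_ℝ) := by
    rw [inner_neg_right, real_inner_smul_right]
  have h2 : ‖-(μ • v)‖ ^ 2 = μ ^ 2 * ‖v‖ ^ 2 := by
    rw [norm_neg, norm_smul, Real.norm_eq_abs, mul_pow, sq_abs]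
  rw [h1, h2] at key
  have hexp : ‖v - gradient f θ‖ ^ 2 =
      ‖v‖ ^ 2 - 2 * ⟪v, gradient f θ⟫_ℝ + ‖gradient f θ‖ ^ 2 := by
    rw [norm_sub_sq_real]
  have hcomm : ⟪v, gradient f θ⟫_ℝ = ⟪gradient f θ, v⟫_ℝ := real_inner_comm _ _
  have hμγ' : γ * μ ≤ 1 := by
    rw [le_div_iff₀ hγ] at hμγ; linarith
  have hv : (0:ℝ) ≤ ‖v‖ ^ 2 := sq_nonneg _
  nlinarith [mul_nonneg hμ.le hv, mul_nonneg (mul_nonneg hμ.le hμ.le) hv]
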